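/- Max-plus Caratheodory theorem: Let S be an idempotent semiring whose natural order is total, and let G be a subset of S^n. If x lies in the subsemimodule of S^n spanned by G, then there is a subset B of G of cardinality at most n such that x lies in the span of B. -/
import Mathlib


/-- The subsemimodule of `V` spanned by a set `G`: all finite `S`-linear
combinations of elements of `G`. -/
def SpanSet (S : Type*) {V : Type*} [Semiring S] [AddCommMonoid V] [Module S V]
    (G : Set V) : Set V :=
  {x | ∃ (k : ℕ) (c : Fin k → S) (u : Fin k → V), (∀ i, u i ∈ G) ∧ x = ∑ i, c i • u i}

private lemma sum_eq_term {S : Type*} [Semiring S]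
    (htot : ∀ x y : S, x + y = y ∨ x + y = x)
    {α : Type*} {s : Finset α} (hs : s.Nonempty) (f : α → S) :
    ∃ i ∈ s, ∑ j ∈ s, f j = f i := by
  induction hs using Finset.Nonempty.cons_induction with
  | singleton a => exact ⟨a, Finset.mem_singleton_self a, Finset.sum_singleton f a⟩
  | cons a s ha hs ih =>
    obtain ⟨i, hi, hsum⟩ := ih
    rw [Finset.sum_cons, hsum]
    rcases htot (f a) (f i) with h | h
    · exact ⟨i, Finset.mem_cons_of_mem hi, h⟩
    · exact ⟨a, Finset.mem_cons_self a s, h⟩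

private lemma add_sum_self {S : Type*} [Semiring S] (hid : ∀ a : S, a + a = a)
    {α : Type*} (s : Finset α) (f : α → S) {i : α} (hi : i ∈ s) :
    f i + ∑ j ∈ s, f j = ∑ j ∈ s, f j := by
  classical
  rw [← Finset.add_sum_erase s f hi, ← add_assoc, hid]

private lemma sum_add_eq {S : Type*} [Semiring S] {α : Type*} (s : Finset α) (g : α → S)
    (a : S) (h : ∀ j ∈ s, g j + a = a) : (∑ j ∈ s, g j) + a = a := by
  classical
  induction s using Finset.induction_on with
  | empty => simp
  | @insert b t hb ih =>
    rw [Finset.sum_insert hb, add_assoc,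
      ih (fun j hj => h j (Finset.mem_insert_of_mem hj)),
      h b (Finset.mem_insert_self b t)]

/-- Max-plus Caratheodory theorem: let `S` be an idempotent semiring
whose natural order (`x ⪯ y ↔ x + y = y`) is total, and `G ⊆ S^n`. If `x` lies
in the span of `G`, then there is a subset `B ⊆ G` of cardinality at most `n`
such that `x` lies in the span of `B`. -/
theorem maxplus_caratheodory {S : Type*} [Semiring S]
    (hid : ∀ a : S, a + a = a)
    (htot : ∀ x y : S, x + y = y ∨ x + y = x)
    {n : ℕ} (G : Set (Fin n → S)) (x : Fin n → S)
    (hx : x ∈ SpanSet S G) :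
    ∃ B : Finset (Fin n → S), ↑B ⊆ G ∧ B.card ≤ n ∧ x ∈ SpanSet S (↑B : Set (Fin n → S)) := by
  classical
  obtain ⟨k, c, u, hu, hxe⟩ := hx
  rcases Nat.eq_zero_or_pos k with hk | hk
  · subst hk
    exact ⟨∅, by simp, by simp, ⟨0, c, u, fun i => i.elim0, hxe⟩⟩
  · have hx' : ∀ p : Fin n, x p = ∑ i, c i * u i p := by
      intro p
      rw [hxe]
      simp
    have key : ∀ m : Fin n, ∃ i : Fin k, x m = c i * u i m := by
      intro m
      have hne : (Finset.univ : Finset (Fin k)).Nonempty := ⟨⟨0, hk⟩, Finset.mem_univ _⟩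
      obtain ⟨i, _, h⟩ := sum_eq_term htot hne (fun i => c i * u i m)
      exact ⟨i, by rw [hx' m]; exact h⟩
    choose σ hσ using key
    refine ⟨Finset.image (fun m => u (σ m)) Finset.univ, ?_, ?_, ?_⟩
    · intro v hv
      simp only [Finset.coe_image, Finset.coe_univ, Set.image_univ, Set.mem_range] at hv
      obtain ⟨m, rfl⟩ := hv
      exact hu _
    · exact (Finset.card_image_le).trans (by simp)
    · refine ⟨n, fun m => c (σ m), fun m => u (σ m), fun m => by simp, ?_⟩
      funext p
      have hsa : ∀ j, (fun i => c i * u i p) j + x p = x p := by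
        intro j
        rw [hx' p]
        exact add_sum_self hid Finset.univ (fun i => c i * u i p) (Finset.mem_univ j)
      have h2 : (∑ m : Fin n, c (σ m) * u (σ m) p) + x p = x p :=
        sum_add_eq _ _ _ (fun m _ => hsa (σ m))
      have h3 : x p + (∑ m : Fin n, c (σ m) * u (σ m) p)
          = ∑ m : Fin n, c (σ m) * u (σ m) p := by
        have := add_sum_self hid Finset.univ (fun m => c (σ m) * u (σ m) p)
          (Finset.mem_univ p)
        simpa only [← hσ p] using this
      have hT : (∑ m : Fin n, c (σ m) * u (σ m) p) = x p :=
        (h3.symm).trans ((add_comm (x p) _).trans h2)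
      simpa using hT.symm
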